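/- For probability distributions P and Q on finite sets (or with densities) and λ > 0, define W_{ℓ,λ}(P, Q) := min over couplings π of P and Q of E_π[ℓ(Y, Ŷ)] + λ KL(π || P ⊗ Q), and the Sinkhorn loss W̄_{ℓ,λ}(P, Q) := 2 W_{ℓ,λ}(P, Q) − W_{ℓ,λ}(P, P) − W_{ℓ,λ}(Q, Q). Then W̄_{ℓ,λ}(P, Q) ≤ 2 W_{ℓ,λ}(P, Q) ≤ W̄_{ℓ,λ}(P, Q) + λ H(P) + λ H(Q), assuming ℓ(y, y) = 0 for all y. -/
import Mathlib


open Real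

/-- Entropic (KL-regularized) optimal transport cost on a finite set:
`W_{ℓ,λ}(P,Q) = min over couplings J of E_J[ℓ] + λ KL(J ‖ P ⊗ Q)`. -/
noncomputable def entOTCost {S : Type*} [Fintype S]
    (l : S → S → ℝ) (lam : ℝ) (P Q : S → ℝ) : ℝ :=
  sInf { c : ℝ | ∃ J : S × S → ℝ,
    (∀ p, 0 ≤ J p) ∧
    (∀ y, ∑ z, J (y, z) = P y) ∧
    (∀ z, ∑ y, J (y, z) = Q z) ∧
    c = (∑ p : S × S, J p * l p.1 p.2) +
        lam * ∑ p : S × S, J p * Real.log (J p / (P p.1 * Q p.2)) }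

/-- Shannon entropy of a distribution on a finite set. -/
noncomputable def shEntropy {S : Type*} [Fintype S] (P : S → ℝ) : ℝ :=
  -(∑ y, P y * Real.log (P y))

/-- Gibbs' inequality / nonnegativity of KL divergence on a finite set. -/
lemma gibbs_kl_nonneg {ι : Type*} [Fintype ι] (J M : ι → ℝ)
    (hJ : ∀ i, 0 ≤ J i) (hM : ∀ i, 0 ≤ M i)
    (habs : ∀ i, M i = 0 → J i = 0)
    (hJ1 : ∑ i, J i = 1) (hM1 : ∑ i, M i = 1) :
    0 ≤ ∑ i, J i * Real.log (J i / M i) := by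
  have key : ∀ i, J i * Real.log (M i / J i) ≤ M i - J i := by
    intro i
    rcases eq_or_lt_of_le (hJ i) with h0 | hpos
    · simp [← h0, hM i]
    · have hMpos : 0 < M i := by
        rcases eq_or_lt_of_le (hM i) with h0 | h; · exact absurd (habs i h0.symm) (by positivity)
        · exact h
      have hlog : Real.log (M i / J i) ≤ M i / J i - 1 :=
        Real.log_le_sub_one_of_pos (by positivity)
      calc J i * Real.log (M i / J i) ≤ J i * (M i / J i - 1) := by
            exact mul_le_mul_of_nonneg_left hlog (hJ i)
        _ = M i - J i := by field_simp
  have hsum : ∑ i, J i * Real.log (M i / J i) ≤ 0 := by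
    calc ∑ i, J i * Real.log (M i / J i) ≤ ∑ i, (M i - J i) :=
          Finset.sum_le_sum fun i _ => key i
      _ = 0 := by rw [Finset.sum_sub_distrib, hJ1, hM1]; ring
  have heq : ∀ i, J i * Real.log (J i / M i) = -(J i * Real.log (M i / J i)) := by
    intro i
    rcases eq_or_lt_of_le (hJ i) with h0 | hpos
    · simp [← h0]
    · have hMpos : 0 < M i := by
        rcases eq_or_lt_of_le (hM i) with h0 | h; · exact absurd (habs i h0.symm) (by positivity)
        · exact h
      rw [Real.log_div (by positivity) (by positivity),
        Real.log_div (by positivity) (by positivity)]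
      ring
  rw [show (∑ i, J i * Real.log (J i / M i)) = -∑ i, J i * Real.log (M i / J i) by
    rw [← Finset.sum_neg_distrib]; exact Finset.sum_congr rfl fun i _ => heq i]
  linarith

/-- Every element of the feasible-cost set is nonnegative. -/
lemma mem_cost_nonneg {S : Type*} [Fintype S]
    (l : S → S → ℝ) (lam : ℝ) (hlam : 0 < lam)
    (hlnn : ∀ y z, 0 ≤ l y z)
    (P Q : S → ℝ)
    (hP0 : ∀ y, 0 ≤ P y) (hP1 : ∑ y, P y = 1)
    (hQ0 : ∀ y, 0 ≤ Q y) (hQ1 : ∑ y, Q y = 1)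
    (c : ℝ)
    (hc : c ∈ { c : ℝ | ∃ J : S × S → ℝ,
      (∀ p, 0 ≤ J p) ∧
      (∀ y, ∑ z, J (y, z) = P y) ∧
      (∀ z, ∑ y, J (y, z) = Q z) ∧
      c = (∑ p : S × S, J p * l p.1 p.2) +
          lam * ∑ p : S × S, J p * Real.log (J p / (P p.1 * Q p.2)) }) :
    0 ≤ c := by
  obtain ⟨J, hJ0, hJP, hJQ, rfl⟩ := hc
  have hcost : 0 ≤ ∑ p : S × S, J p * l p.1 p.2 :=
    Finset.sum_nonneg fun p _ => mul_nonneg (hJ0 p) (hlnn p.1 p.2)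
  have hJ1 : ∑ p : S × S, J p = 1 := by
    rw [← hP1]
    rw [Fintype.sum_prod_type]
    exact Finset.sum_congr rfl fun y _ => hJP y
  have hM1 : ∑ p : S × S, P p.1 * Q p.2 = 1 := by
    rw [Fintype.sum_prod_type]
    simp_rw [← Finset.mul_sum, hQ1, mul_one, hP1]
  have habs : ∀ p : S × S, P p.1 * Q p.2 = 0 → J p = 0 := by
    rintro ⟨y, z⟩ hp
    rcases mul_eq_zero.mp hp with h | h
    · have := hJP y
      rw [h] at this
      have := (Finset.sum_eq_zero_iff_of_nonneg (fun z _ => hJ0 (y, z))).mp this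
      exact this z (Finset.mem_univ z)
    · have := hJQ z
      rw [h] at this
      have := (Finset.sum_eq_zero_iff_of_nonneg (fun y _ => hJ0 (y, z))).mp this
      exact this y (Finset.mem_univ y)
  have hkl : 0 ≤ ∑ p : S × S, J p * Real.log (J p / (P p.1 * Q p.2)) :=
    gibbs_kl_nonneg J (fun p => P p.1 * Q p.2) hJ0
      (fun p => mul_nonneg (hP0 p.1) (hQ0 p.2)) habs hJ1 hM1
  positivity

/-- Diagonal bound: `W(P,P) ≤ λ H(P)` via the identity coupling. -/
lemma entOTCost_self_le {S : Type*} [Fintype S]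
    (l : S → S → ℝ) (lam : ℝ) (hlam : 0 < lam)
    (hl0 : ∀ y, l y y = 0) (hlnn : ∀ y z, 0 ≤ l y z)
    (P : S → ℝ) (hP0 : ∀ y, 0 ≤ P y) (hP1 : ∑ y, P y = 1) :
    entOTCost l lam P P ≤ lam * shEntropy P := by
  classical
  have hbdd : BddBelow { c : ℝ | ∃ J : S × S → ℝ,
      (∀ p, 0 ≤ J p) ∧
      (∀ y, ∑ z, J (y, z) = P y) ∧
      (∀ z, ∑ y, J (y, z) = P z) ∧
      c = (∑ p : S × S, J p * l p.1 p.2) +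
          lam * ∑ p : S × S, J p * Real.log (J p / (P p.1 * P p.2)) } :=
    ⟨0, fun c hc => mem_cost_nonneg l lam hlam hlnn P P hP0 hP1 hP0 hP1 c hc⟩
  apply csInf_le hbdd
  refine ⟨fun p => if p.1 = p.2 then P p.1 else 0, ?_, ?_, ?_, ?_⟩
  · intro p; dsimp only; split <;> simp [hP0]
  · intro y; simp
  · intro z; simp
  · have hcost : (∑ p : S × S, (if p.1 = p.2 then P p.1 else 0) * l p.1 p.2) = 0 := by
      rw [Fintype.sum_prod_type]
      apply Finset.sum_eq_zero; intro y _
      apply Finset.sum_eq_zero; intro z _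
      dsimp only
      split
      · rename_i h; subst h; simp [hl0]
      · simp
    have hkl : (∑ p : S × S,
        (if p.1 = p.2 then P p.1 else 0) * Real.log ((if p.1 = p.2 then P p.1 else 0) / (P p.1 * P p.2)))
        = shEntropy P := by
      rw [Fintype.sum_prod_type]
      have : ∀ y : S, (∑ z, (if y = z then P y else 0) *
          Real.log ((if y = z then P y else 0) / (P y * P z)))
          = -(P y * Real.log (P y)) := by
        intro y
        rw [Finset.sum_eq_single y]
        · simp only [if_pos rfl, if_true]
          rcases eq_or_lt_of_le (hP0 y) with h0 | hpos
          · simp [← h0]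
          · have : P y / (P y * P y) = (P y)⁻¹ := by field_simp
            rw [this, Real.log_inv]; ring
        · intro z _ hz; simp [Ne.symm hz]
        · intro h; exact absurd (Finset.mem_univ y) h
      rw [Finset.sum_congr rfl fun y _ => this y, shEntropy, ← Finset.sum_neg_distrib]
    rw [hcost, hkl]; ring

/-- Lemma 3 (Sinkhorn loss sandwich): with `W̄ = 2W(P,Q) − W(P,P) − W(Q,Q)`,
`W̄(P,Q) ≤ 2 W(P,Q) ≤ W̄(P,Q) + λH(P) + λH(Q)`. -/
theorem sinkhorn_loss_sandwich {S : Type*} [Fintype S]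
    (l : S → S → ℝ) (lam : ℝ) (hlam : 0 < lam)
    (hl0 : ∀ y, l y y = 0) (hlnn : ∀ y z, 0 ≤ l y z)
    (P Q : S → ℝ)
    (hP0 : ∀ y, 0 ≤ P y) (hP1 : ∑ y, P y = 1)
    (hQ0 : ∀ y, 0 ≤ Q y) (hQ1 : ∑ y, Q y = 1) :
    (2 * entOTCost l lam P Q - entOTCost l lam P P - entOTCost l lam Q Q)
        ≤ 2 * entOTCost l lam P Q ∧
    2 * entOTCost l lam P Q ≤
      (2 * entOTCost l lam P Q - entOTCost l lam P P - entOTCost l lam Q Q)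
        + lam * shEntropy P + lam * shEntropy Q := by
  have h1 : 0 ≤ entOTCost l lam P P :=
    Real.sInf_nonneg fun c hc => mem_cost_nonneg l lam hlam hlnn P P hP0 hP1 hP0 hP1 c hc
  have h2 : 0 ≤ entOTCost l lam Q Q :=
    Real.sInf_nonneg fun c hc => mem_cost_nonneg l lam hlam hlnn Q Q hQ0 hQ1 hQ0 hQ1 c hc
  have h3 : entOTCost l lam P P ≤ lam * shEntropy P :=
    entOTCost_self_le l lam hlam hl0 hlnn P hP0 hP1
  have h4 : entOTCost l lam Q Q ≤ lam * shEntropy Q :=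
    entOTCost_self_le l lam hlam hl0 hlnn Q hQ0 hQ1
  constructor <;> linarith
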